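/- The q-exponential operator T(aD_q) satisfies T(aD_q){1/((bx;q)_∞ (cx;q)_∞)} = (abcx;q)_∞ / ((bx;q)_∞ (cx;q)_∞ (ac;q)_∞ (ab;q)_∞). -/

import Mathlib

open Finset Filter

/-- finite q-Pochhammer symbol `(a;q)_n` -/
noncomputable def qPoch (q a : ℂ) (n : ℕ) : ℂ := ∏ j ∈ Finset.range n, (1 - a * q ^ j)

/-- infinite q-Pochhammer symbol `(a;q)_∞` -/
noncomputable def qPochInf (q a : ℂ) : ℂ := ∏' j : ℕ, (1 - a * q ^ j)

/-- Gaussian binomial coefficient `[n choose k]_q` -/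
noncomputable def qbinom (q : ℂ) (n k : ℕ) : ℂ :=
  qPoch q q n / (qPoch q q k * qPoch q q (n - k))

/-- the q-differential operator `D_q` -/
noncomputable def Dq (q : ℂ) (f : ℂ → ℂ) : ℂ → ℂ := fun x => (f x - f (q * x)) / x

/-- homogeneous Hahn polynomial `Φ_m^{(α)}(b,x|q)` -/
noncomputable def hahn (q α b x : ℂ) (m : ℕ) : ℂ :=
  ∑ k ∈ Finset.range (m + 1), qbinom q m k * qPoch q α k * b ^ k * x ^ (m - k)


section aux
variable {q α : ℂ}

lemma summable_geo (hq : ‖q‖ < 1) (w : ℂ) : Summable (fun j : ℕ => ‖w‖ * ‖q‖ ^ j) :=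
  (summable_geometric_of_lt_one (norm_nonneg q) hq).mul_left _

lemma one_sub_ne_zero_of_norm_lt' {u : ℂ} (hu : ‖u‖ < 1) : (1 : ℂ) - u ≠ 0 := by
  intro h
  rw [sub_eq_zero] at h
  rw [← h] at hu
  simp at hu

lemma norm_wqj_lt (hq : ‖q‖ < 1) {w : ℂ} (hw : ‖w‖ < 1) (j : ℕ) : ‖w * q ^ j‖ < 1 := by
  rw [norm_mul, norm_pow]
  calc ‖w‖ * ‖q‖ ^ j ≤ ‖w‖ * 1 := by
        apply mul_le_mul_of_nonneg_left _ (norm_nonneg w)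
        exact pow_le_one₀ (norm_nonneg q) hq.le
    _ < 1 := by simpa using hw

lemma qPoch_succ (a : ℂ) (n : ℕ) : qPoch q a (n + 1) = qPoch q a n * (1 - a * q ^ n) :=
  Finset.prod_range_succ _ _

lemma qPoch_succ' (a : ℂ) (n : ℕ) : qPoch q a (n + 1) = (1 - a) * qPoch q (a * q) n := by
  rw [qPoch, Finset.prod_range_succ', qPoch]
  simp only [pow_zero, mul_one]
  rw [mul_comm]
  congr 1
  refine Finset.prod_congr rfl fun j _ => ?_
  ring_nf

lemma qPoch_zero (a : ℂ) : qPoch q a 0 = 1 := rfl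

lemma qPoch_q_ne_zero (hq : ‖q‖ < 1) (n : ℕ) : qPoch q q n ≠ 0 := by
  rw [qPoch]
  refine Finset.prod_ne_zero_iff.mpr fun j _ => ?_
  exact one_sub_ne_zero_of_norm_lt' (norm_wqj_lt hq hq j)

lemma prod_one_add_le_exp (x : ℕ → ℝ) (hx : ∀ j, 0 ≤ x j) (n : ℕ) :
    ∏ j ∈ Finset.range n, (1 + x j) ≤ Real.exp (∑ j ∈ Finset.range n, x j) := by
  rw [Real.exp_sum]
  refine Finset.prod_le_prod (fun j _ => by linarith [hx j]) (fun j _ => ?_)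
  linarith [Real.add_one_le_exp (x j)]

lemma one_sub_sum_le_prod (x : ℕ → ℝ) (h0 : ∀ j, 0 ≤ x j) (h1 : ∀ j, x j ≤ 1) (n : ℕ) :
    1 - ∑ j ∈ Finset.range n, x j ≤ ∏ j ∈ Finset.range n, (1 - x j) := by
  induction n with
  | zero => simp
  | succ n ih =>
    rw [Finset.sum_range_succ, Finset.prod_range_succ]
    have hP : (0:ℝ) ≤ ∏ j ∈ Finset.range n, (1 - x j) :=
      Finset.prod_nonneg fun j _ => by linarith [h1 j]
    have hS : (0:ℝ) ≤ ∑ j ∈ Finset.range n, x j :=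
      Finset.sum_nonneg fun j _ => h0 j
    nlinarith [h0 n, h1 n, ih]


lemma geom_sum_le_inv (r : ℝ) (h0 : 0 ≤ r) (h1 : r < 1) (m : ℕ) :
    ∑ i ∈ Finset.range m, r ^ i ≤ (1 - r)⁻¹ := by
  have := Summable.sum_le_tsum (Finset.range m) (fun i _ => pow_nonneg h0 i)
    (summable_geometric_of_lt_one h0 h1)
  rwa [tsum_geometric_of_lt_one h0 h1] at this

lemma exists_qPoch_lb (hq : ‖q‖ < 1) : ∃ Q : ℝ, 0 < Q ∧ ∀ n, Q ≤ ‖qPoch q q n‖ := by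
  set r := ‖q‖ with hr
  have h0 : 0 ≤ r := norm_nonneg q
  have hrpos : 0 < 1 - r := by linarith
  -- real product lower bound
  set P : ℕ → ℝ := fun n => ∏ j ∈ Finset.range n, (1 - r ^ (j + 1)) with hP
  have hfac0 : ∀ j : ℕ, 0 ≤ 1 - r ^ (j + 1) := by
    intro j
    have : r ^ (j+1) ≤ 1 := pow_le_one₀ h0 hq.le
    linarith
  have hfac1 : ∀ j : ℕ, 1 - r ^ (j + 1) ≤ 1 := by
    intro j; have := pow_nonneg h0 (j+1); linarith
  have hPnn : ∀ n, 0 ≤ P n := fun n => Finset.prod_nonneg fun j _ => hfac0 j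
  -- choose N
  obtain ⟨N, hN⟩ : ∃ N : ℕ, r ^ (N + 1) * (1 - r)⁻¹ ≤ 1 / 2 := by
    have htend : Tendsto (fun k : ℕ => r ^ (k + 1) * (1 - r)⁻¹) atTop (nhds (0 * (1 - r)⁻¹)) :=
      ((tendsto_pow_atTop_nhds_zero_of_lt_one h0 hq).comp (tendsto_add_atTop_nat 1)).mul_const _
    rw [zero_mul] at htend
    have := htend.eventually_le_const (by norm_num : (0:ℝ) < 1/2)
    exact this.exists
  have hPN : 0 < P N := by
    apply Finset.prod_pos
    intro j _
    have : r ^ (j+1) < 1 := pow_lt_one₀ h0 hq (by omega)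
    linarith
  refine ⟨P N * (1/2), by positivity, fun n => ?_⟩
  have key : P N * (1/2) ≤ P n := by
    rcases le_or_gt n N with h | h
    · obtain ⟨m, rfl⟩ := Nat.exists_eq_add_of_le h
      have : P (n + m) ≤ P n := by
        rw [hP]
        simp only [Finset.prod_range_add]
        have h2 : ∏ j ∈ Finset.range m, (1 - r ^ (n + j + 1)) ≤ 1 :=
          Finset.prod_le_one (fun j _ => hfac0 _) (fun j _ => hfac1 _)
        calc P n * ∏ j ∈ Finset.range m, (1 - r ^ (n + j + 1)) ≤ P n * 1 :=
              mul_le_mul_of_nonneg_left h2 (hPnn n)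
          _ = P n := mul_one _
      nlinarith [hPnn (n + m)]
    · obtain ⟨m, rfl⟩ := Nat.exists_eq_add_of_le h.le
      rw [hP]
      simp only [Finset.prod_range_add]
      have htail : 1/2 ≤ ∏ j ∈ Finset.range m, (1 - r ^ (N + j + 1)) := by
        have h1 : ∑ j ∈ Finset.range m, r ^ (N + j + 1) ≤ 1/2 := by
          have : ∀ j, r ^ (N + j + 1) = r ^ (N + 1) * r ^ j := by
            intro j; rw [← pow_add]; ring_nf
          calc ∑ j ∈ Finset.range m, r ^ (N + j + 1)
              = r ^ (N+1) * ∑ j ∈ Finset.range m, r ^ j := by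
                rw [Finset.mul_sum]; exact Finset.sum_congr rfl fun j _ => this j
            _ ≤ r ^ (N+1) * (1 - r)⁻¹ :=
                mul_le_mul_of_nonneg_left (geom_sum_le_inv r h0 hq m) (pow_nonneg h0 _)
            _ ≤ 1/2 := hN
        have h2 := one_sub_sum_le_prod (fun j => r ^ (N + j + 1)) (fun j => pow_nonneg h0 _)
          (fun j => pow_le_one₀ h0 hq.le) m
        linarith
      calc P N * (1/2) ≤ P N * ∏ j ∈ Finset.range m, (1 - r ^ (N + j + 1)) :=
            mul_le_mul_of_nonneg_left htail hPN.le
        _ = _ := rfl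
  refine key.trans ?_
  rw [qPoch, norm_prod]
  apply Finset.prod_le_prod (fun j _ => hfac0 j)
  intro j _
  have h1 : ‖(1:ℂ)‖ - ‖q * q ^ j‖ ≤ ‖1 - q * q ^ j‖ := norm_sub_norm_le _ _
  rw [norm_one, norm_mul, norm_pow] at h1
  calc 1 - r ^ (j + 1) = 1 - r * r ^ j := by rw [pow_succ']
    _ ≤ ‖1 - q * q ^ j‖ := h1

lemma norm_qPoch_le (hq : ‖q‖ < 1) (a : ℂ) (n : ℕ) :
    ‖qPoch q a n‖ ≤ Real.exp (‖a‖ * (1 - ‖q‖)⁻¹) := by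
  rw [qPoch, norm_prod]
  calc ∏ j ∈ Finset.range n, ‖1 - a * q ^ j‖
      ≤ ∏ j ∈ Finset.range n, (1 + ‖a‖ * ‖q‖ ^ j) := by
        apply Finset.prod_le_prod (fun j _ => norm_nonneg _)
        intro j _
        calc ‖1 - a * q ^ j‖ ≤ ‖(1:ℂ)‖ + ‖a * q ^ j‖ := norm_sub_le _ _
          _ = 1 + ‖a‖ * ‖q‖ ^ j := by rw [norm_one, norm_mul, norm_pow]
    _ ≤ Real.exp (∑ j ∈ Finset.range n, ‖a‖ * ‖q‖ ^ j) :=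
        prod_one_add_le_exp _ (fun j => by positivity) n
    _ ≤ Real.exp (‖a‖ * (1 - ‖q‖)⁻¹) := by
        apply Real.exp_le_exp.mpr
        rw [← Finset.mul_sum]
        exact mul_le_mul_of_nonneg_left (geom_sum_le_inv _ (norm_nonneg q) hq n) (norm_nonneg a)


lemma norm_log_fac_le {v : ℂ} (hv : ‖v‖ ≤ 1/2) : ‖Complex.log (1 - v)‖ ≤ (3/2) * ‖v‖ := by
  have := Complex.norm_log_one_add_half_le_self (z := -v) (by simpa using hv)
  simpa [sub_eq_add_neg] using this

lemma summable_norm_log (hq : ‖q‖ < 1) {v : ℂ} (hv : ‖v‖ ≤ 1/2) :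
    Summable (fun j : ℕ => ‖Complex.log (1 - v * q ^ j)‖) := by
  apply Summable.of_nonneg_of_le (fun j => norm_nonneg _)
    (fun j => ?_) (((summable_geometric_of_lt_one (norm_nonneg q) hq).mul_left ((3/2) * ‖v‖)))
  have hnorm : ‖v * q ^ j‖ ≤ 1/2 := by
    rw [norm_mul, norm_pow]
    calc ‖v‖ * ‖q‖ ^ j ≤ (1/2) * 1 := by
          apply mul_le_mul hv (pow_le_one₀ (norm_nonneg q) hq.le) (by positivity) (by norm_num)
      _ = 1/2 := by norm_num
  calc ‖Complex.log (1 - v * q ^ j)‖ ≤ (3/2) * ‖v * q ^ j‖ := norm_log_fac_le hnorm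
    _ = (3/2) * ‖v‖ * ‖q‖ ^ j := by rw [norm_mul, norm_pow]; ring

lemma tsum_norm_log_le (hq : ‖q‖ < 1) {v : ℂ} (hv : ‖v‖ ≤ 1/2) :
    ∑' j : ℕ, ‖Complex.log (1 - v * q ^ j)‖ ≤ (3/2) * ‖v‖ * (1 - ‖q‖)⁻¹ := by
  have hsum := summable_norm_log hq hv
  have hgeo : Summable (fun j : ℕ => (3/2) * ‖v‖ * ‖q‖ ^ j) :=
    (summable_geometric_of_lt_one (norm_nonneg q) hq).mul_left _
  calc ∑' j : ℕ, ‖Complex.log (1 - v * q ^ j)‖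
      ≤ ∑' j : ℕ, (3/2) * ‖v‖ * ‖q‖ ^ j := by
        apply Summable.tsum_le_tsum _ hsum hgeo
        intro j
        have hnorm : ‖v * q ^ j‖ ≤ 1/2 := by
          rw [norm_mul, norm_pow]
          calc ‖v‖ * ‖q‖ ^ j ≤ (1/2) * 1 :=
                mul_le_mul hv (pow_le_one₀ (norm_nonneg q) hq.le) (by positivity) (by norm_num)
            _ = 1/2 := by norm_num
        calc ‖Complex.log (1 - v * q ^ j)‖ ≤ (3/2) * ‖v * q ^ j‖ := norm_log_fac_le hnorm
          _ = (3/2) * ‖v‖ * ‖q‖ ^ j := by rw [norm_mul, norm_pow]; ring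
    _ = (3/2) * ‖v‖ * (1 - ‖q‖)⁻¹ := by
        rw [tsum_mul_left, tsum_geometric_of_lt_one (norm_nonneg q) hq]

lemma summable_log (hq : ‖q‖ < 1) (w : ℂ) :
    Summable (fun j : ℕ => Complex.log (1 - w * q ^ j)) := by
  -- eventually ‖w * q^j‖ ≤ 1/2
  obtain ⟨N, hN⟩ : ∃ N : ℕ, ‖w‖ * ‖q‖ ^ N ≤ 1/2 := by
    have htend : Tendsto (fun k : ℕ => ‖w‖ * ‖q‖ ^ k) atTop (nhds 0) := by
      simpa using (tendsto_pow_atTop_nhds_zero_of_lt_one (norm_nonneg q) hq).const_mul ‖w‖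
    exact (htend.eventually_le_const (by norm_num : (0:ℝ) < 1/2)).exists
  rw [← summable_nat_add_iff N]
  have hv : ‖w * q ^ N‖ ≤ 1/2 := by rw [norm_mul, norm_pow]; exact hN
  have := (summable_norm_log hq hv).of_norm
  apply this.congr
  intro j
  congr 2
  rw [mul_assoc, ← pow_add]
  ring_nf

lemma qPochInf_eq_exp (hq : ‖q‖ < 1) {w : ℂ} (hw : ‖w‖ < 1) :
    qPochInf q w = Complex.exp (∑' j : ℕ, Complex.log (1 - w * q ^ j)) := by
  have hne : ∀ j : ℕ, (1:ℂ) - w * q ^ j ≠ 0 := by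
    intro j
    apply one_sub_ne_zero_of_norm_lt'
    rw [norm_mul, norm_pow]
    calc ‖w‖ * ‖q‖ ^ j ≤ ‖w‖ * 1 :=
          mul_le_mul_of_nonneg_left (pow_le_one₀ (norm_nonneg q) hq.le) (norm_nonneg w)
      _ < 1 := by simpa using hw
  have h := Complex.cexp_tsum_eq_tprod (f := fun j => 1 - w * q ^ j) hne (summable_log hq w)
  exact h.symm

lemma multipliable_qPochInf (hq : ‖q‖ < 1) {w : ℂ} (hw : ‖w‖ < 1) :
    Multipliable (fun j : ℕ => 1 - w * q ^ j) := by
  have hne : ∀ j : ℕ, (1:ℂ) - w * q ^ j ≠ 0 := by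
    intro j
    apply one_sub_ne_zero_of_norm_lt'
    rw [norm_mul, norm_pow]
    calc ‖w‖ * ‖q‖ ^ j ≤ ‖w‖ * 1 :=
          mul_le_mul_of_nonneg_left (pow_le_one₀ (norm_nonneg q) hq.le) (norm_nonneg w)
      _ < 1 := by simpa using hw
  exact Complex.multipliable_of_summable_log (summable_log hq w)

lemma qPochInf_ne_zero (hq : ‖q‖ < 1) {w : ℂ} (hw : ‖w‖ < 1) : qPochInf q w ≠ 0 := by
  rw [qPochInf_eq_exp hq hw]; exact Complex.exp_ne_zero _


lemma norm_mul_pow_lt (hq : ‖q‖ < 1) {w : ℂ} (hw : ‖w‖ < 1) (k : ℕ) : ‖w * q ^ k‖ < 1 :=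
  norm_wqj_lt hq hw k

lemma qPochInf_split (hq : ‖q‖ < 1) {w : ℂ} (hw : ‖w‖ < 1) :
    qPochInf q w = (1 - w) * qPochInf q (w * q) := by
  have hmul : Multipliable (fun n : ℕ => 1 - w * q ^ (n + 1)) := by
    have h := multipliable_qPochInf hq (w := w * q) (by simpa [norm_mul] using norm_mul_pow_lt hq hw 1)
    apply h.congr
    intro j
    rw [mul_assoc, ← pow_succ']
  have h := tprod_eq_zero_mul' (f := fun j : ℕ => 1 - w * q ^ j) hmul
  rw [qPochInf, h]
  simp only [pow_zero, mul_one]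
  congr 1
  rw [qPochInf]
  apply tprod_congr
  intro j
  rw [mul_assoc, ← pow_succ']

lemma tendsto_qPoch (hq : ‖q‖ < 1) {w : ℂ} (hw : ‖w‖ < 1) :
    Tendsto (fun n => qPoch q w n) atTop (nhds (qPochInf q w)) :=
  (multipliable_qPochInf hq hw).hasProd.tendsto_prod_nat

lemma tendsto_qPochInf_pow (hq : ‖q‖ < 1) {w : ℂ} (hw : ‖w‖ < 1) :
    Tendsto (fun k : ℕ => qPochInf q (w * q ^ k)) atTop (nhds 1) := by
  set S : ℕ → ℂ := fun k => ∑' j : ℕ, Complex.log (1 - (w * q ^ k) * q ^ j) with hS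
  have heq : ∀ k, qPochInf q (w * q ^ k) = Complex.exp (S k) := fun k =>
    qPochInf_eq_exp hq (norm_mul_pow_lt hq hw k)
  have htend : Tendsto S atTop (nhds 0) := by
    apply squeeze_zero_norm' (a := fun k => (3/2) * (‖w‖ * ‖q‖ ^ k) * (1 - ‖q‖)⁻¹)
    · -- eventually bound
      obtain ⟨N, hN⟩ : ∃ N : ℕ, ‖w‖ * ‖q‖ ^ N ≤ 1/2 := by
        have htend : Tendsto (fun k : ℕ => ‖w‖ * ‖q‖ ^ k) atTop (nhds 0) := by
          simpa using (tendsto_pow_atTop_nhds_zero_of_lt_one (norm_nonneg q) hq).const_mul ‖w‖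
        exact (htend.eventually_le_const (by norm_num : (0:ℝ) < 1/2)).exists
      filter_upwards [eventually_ge_atTop N] with k hk
      have hvk : ‖w * q ^ k‖ ≤ 1/2 := by
        rw [norm_mul, norm_pow]
        calc ‖w‖ * ‖q‖ ^ k ≤ ‖w‖ * ‖q‖ ^ N := by
              apply mul_le_mul_of_nonneg_left _ (norm_nonneg w)
              exact pow_le_pow_of_le_one (norm_nonneg q) hq.le hk
          _ ≤ 1/2 := hN
      calc ‖S k‖ ≤ ∑' j : ℕ, ‖Complex.log (1 - (w * q ^ k) * q ^ j)‖ :=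
            norm_tsum_le_tsum_norm (summable_norm_log hq hvk)
        _ ≤ (3/2) * ‖w * q ^ k‖ * (1 - ‖q‖)⁻¹ := tsum_norm_log_le hq hvk
        _ = (3/2) * (‖w‖ * ‖q‖ ^ k) * (1 - ‖q‖)⁻¹ := by rw [norm_mul, norm_pow]
    · have : Tendsto (fun k : ℕ => ‖w‖ * ‖q‖ ^ k) atTop (nhds 0) := by
        simpa using (tendsto_pow_atTop_nhds_zero_of_lt_one (norm_nonneg q) hq).const_mul ‖w‖
      have h2 := (this.const_mul ((3:ℝ)/2)).mul_const ((1 - ‖q‖)⁻¹)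
      simpa using h2
  have : Tendsto (fun k => Complex.exp (S k)) atTop (nhds (Complex.exp 0)) :=
    (Complex.continuous_exp.tendsto 0).comp htend
  rw [Complex.exp_zero] at this
  exact this.congr fun k => (heq k).symm

/-- the term of the q-binomial series -/
noncomputable def qbt (q α z : ℂ) (n : ℕ) : ℂ := qPoch q α n * z ^ n / qPoch q q n

lemma exists_qbt_bound (hq : ‖q‖ < 1) (α : ℂ) :
    ∃ C : ℝ, 0 < C ∧ ∀ (z : ℂ) (n : ℕ), ‖qbt q α z n‖ ≤ C * ‖z‖ ^ n := by
  obtain ⟨Q, hQ0, hQ⟩ := exists_qPoch_lb hq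
  refine ⟨Real.exp (‖α‖ * (1 - ‖q‖)⁻¹) / Q, by positivity, fun z n => ?_⟩
  rw [qbt, norm_div, norm_mul, norm_pow]
  rw [div_le_iff₀ (lt_of_lt_of_le hQ0 (hQ n))] at *
  calc ‖qPoch q α n‖ * ‖z‖ ^ n ≤ Real.exp (‖α‖ * (1 - ‖q‖)⁻¹) * ‖z‖ ^ n :=
        mul_le_mul_of_nonneg_right (norm_qPoch_le hq α n) (by positivity)
    _ = Real.exp (‖α‖ * (1 - ‖q‖)⁻¹) / Q * ‖z‖ ^ n * Q := by
        field_simp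
    _ ≤ Real.exp (‖α‖ * (1 - ‖q‖)⁻¹) / Q * ‖z‖ ^ n * ‖qPoch q q n‖ := by
        apply mul_le_mul_of_nonneg_left (hQ n) (by positivity)

lemma summable_qbt (hq : ‖q‖ < 1) (α : ℂ) {z : ℂ} (hz : ‖z‖ < 1) :
    Summable (fun n => qbt q α z n) := by
  obtain ⟨C, hC0, hC⟩ := exists_qbt_bound hq α
  apply Summable.of_norm
  apply Summable.of_nonneg_of_le (fun n => norm_nonneg _) (fun n => hC z n)
  exact (summable_geometric_of_lt_one (norm_nonneg z) hz).mul_left C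

lemma summable_qbt_norm (hq : ‖q‖ < 1) (α : ℂ) {z : ℂ} (hz : ‖z‖ < 1) :
    Summable (fun n => ‖qbt q α z n‖) := by
  obtain ⟨C, hC0, hC⟩ := exists_qbt_bound hq α
  apply Summable.of_nonneg_of_le (fun n => norm_nonneg _) (fun n => hC z n)
  exact (summable_geometric_of_lt_one (norm_nonneg z) hz).mul_left C

lemma qbt_shift (z : ℂ) (n : ℕ) : qbt q α (q * z) n = q ^ n * qbt q α z n := by
  rw [qbt, qbt, mul_pow]; ring

lemma qbt_zero (z : ℂ) : qbt q α z 0 = 1 := by simp [qbt, qPoch]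

lemma qbt_rec (hq : ‖q‖ < 1) (z : ℂ) (n : ℕ) :
    (1 - q ^ (n+1)) * qbt q α z (n+1) = z * (1 - α * q ^ n) * qbt q α z n := by
  rw [qbt, qbt, qPoch_succ, qPoch_succ]
  have hne : qPoch q q (n+1) ≠ 0 := qPoch_q_ne_zero hq (n+1)
  have hne' : qPoch q q n ≠ 0 := qPoch_q_ne_zero hq n
  rw [qPoch_succ] at hne
  have h1 : (1:ℂ) - q * q ^ n ≠ 0 := fun h => hne (by rw [h, mul_zero])
  have hp : (1:ℂ) - q ^ (n+1) = 1 - q * q ^ n := by rw [pow_succ']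
  rw [hp]
  field_simp
  ring

/-- the functional equation -/
lemma qbinom_FE (hq : ‖q‖ < 1) (α : ℂ) {z : ℂ} (hz : ‖z‖ < 1) :
    (1 - z) * ∑' n, qbt q α z n = (1 - α * z) * ∑' n, qbt q α (q * z) n := by
  have hqz : ‖q * z‖ < 1 := by
    rw [norm_mul]
    calc ‖q‖ * ‖z‖ ≤ 1 * ‖z‖ := mul_le_mul_of_nonneg_right hq.le (norm_nonneg z)
      _ = ‖z‖ := one_mul _
      _ < 1 := hz
  have h1 : Summable (fun n => qbt q α z n) := summable_qbt hq α hz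
  have h2 : Summable (fun n => qbt q α (q * z) n) := summable_qbt hq α hqz
  have key : ∑' n, (qbt q α z n - qbt q α (q * z) n)
      = ∑' n, (z * qbt q α z n - α * z * qbt q α (q * z) n) := by
    have hsub : Summable (fun n => qbt q α z n - qbt q α (q * z) n) := h1.sub h2
    rw [Summable.tsum_eq_zero_add hsub]
    simp only [qbt_zero, pow_zero, sub_self, zero_add]
    apply tsum_congr
    intro n
    rw [qbt_shift, qbt_shift]
    have := qbt_rec (α := α) hq z n
    calc qbt q α z (n+1) - q ^ (n+1) * qbt q α z (n+1)
        = (1 - q ^ (n+1)) * qbt q α z (n+1) := by ring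
      _ = z * (1 - α * q ^ n) * qbt q α z n := this
      _ = z * qbt q α z n - α * z * (q ^ n * qbt q α z n) := by ring
  have e1 : ∑' n, (qbt q α z n - qbt q α (q * z) n)
      = (∑' n, qbt q α z n) - ∑' n, qbt q α (q * z) n := Summable.tsum_sub h1 h2
  have e2 : ∑' n, (z * qbt q α z n - α * z * qbt q α (q * z) n)
      = z * (∑' n, qbt q α z n) - α * z * ∑' n, qbt q α (q * z) n := by
    rw [Summable.tsum_sub (h1.mul_left z) (h2.mul_left (α * z)), tsum_mul_left, tsum_mul_left]
  rw [e1, e2] at key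
  linear_combination key

/-- iterated functional equation -/
lemma qbinom_iter (hq : ‖q‖ < 1) (α : ℂ) {z : ℂ} (hz : ‖z‖ < 1) (k : ℕ) :
    qPochInf q z * ∑' n, qbt q α z n
      = qPoch q (α * z) k * (qPochInf q (z * q ^ k) * ∑' n, qbt q α (q ^ k * z) n) := by
  induction k with
  | zero => simp [qPoch]
  | succ k ih =>
    rw [ih, qPoch_succ]
    have hzk : ‖z * q ^ k‖ < 1 := norm_wqj_lt hq hz k
    have step : qPochInf q (z * q ^ k) * ∑' n, qbt q α (q ^ k * z) n
        = (1 - α * z * q ^ k) * (qPochInf q (z * q ^ (k+1)) * ∑' n, qbt q α (q ^ (k+1) * z) n) := by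
      have hsplit := qPochInf_split hq hzk
      have hzk' : ‖q ^ k * z‖ < 1 := by rw [mul_comm]; exact hzk
      have hFE := qbinom_FE hq α (z := q ^ k * z) hzk'
      have harg1 : z * q ^ k * q = z * q ^ (k+1) := by rw [mul_assoc, ← pow_succ]
      have harg2 : q * (q ^ k * z) = q ^ (k+1) * z := by rw [pow_succ]; ring
      rw [hsplit, harg1]
      have : (1 - z * q ^ k) * ∑' n, qbt q α (q ^ k * z) n
          = (1 - α * (q ^ k * z)) * ∑' n, qbt q α (q * (q ^ k * z)) n := by
        rw [← hFE]; ring_nf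
      rw [harg2] at this
      calc (1 - z * q ^ k) * qPochInf q (z * q ^ (k+1)) * ∑' n, qbt q α (q ^ k * z) n
          = qPochInf q (z * q ^ (k+1)) * ((1 - z * q ^ k) * ∑' n, qbt q α (q ^ k * z) n) := by ring
        _ = qPochInf q (z * q ^ (k+1)) * ((1 - α * (q ^ k * z)) * ∑' n, qbt q α (q ^ (k+1) * z) n) := by rw [this]
        _ = (1 - α * z * q ^ k) * (qPochInf q (z * q ^ (k+1)) * ∑' n, qbt q α (q ^ (k+1) * z) n) := by ring
    rw [step]
    ring

lemma qbt_tail_bound (hq : ‖q‖ < 1) (α : ℂ) {C : ℝ} (hC0 : 0 < C)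
    (hC : ∀ (z : ℂ) (n : ℕ), ‖qbt q α z n‖ ≤ C * ‖z‖ ^ n)
    {w : ℂ} (hw : ‖w‖ < 1) :
    ‖(∑' n, qbt q α w n) - 1‖ ≤ C * ‖w‖ * (1 - ‖w‖)⁻¹ := by
  have hsum : Summable (fun n => qbt q α w n) := summable_qbt hq α hw
  have h0 : ∑' n, qbt q α w n = 1 + ∑' n, qbt q α w (n + 1) := by
    rw [Summable.tsum_eq_zero_add hsum, qbt_zero]
  rw [h0, add_sub_cancel_left]
  have hsum2 : Summable (fun n : ℕ => ‖qbt q α w (n+1)‖) :=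
    (summable_nat_add_iff 1).mpr (summable_qbt_norm hq α hw)
  have hgeo : Summable (fun n : ℕ => (C * ‖w‖) * ‖w‖ ^ n) :=
    (summable_geometric_of_lt_one (norm_nonneg w) hw).mul_left (C * ‖w‖)
  have hle : ∀ n : ℕ, ‖qbt q α w (n+1)‖ ≤ (C * ‖w‖) * ‖w‖ ^ n := by
    intro n
    have := hC w (n+1)
    rw [pow_succ] at this
    calc ‖qbt q α w (n+1)‖ ≤ C * (‖w‖ ^ n * ‖w‖) := this
      _ = (C * ‖w‖) * ‖w‖ ^ n := by ring
  calc ‖∑' n, qbt q α w (n+1)‖ ≤ ∑' n, ‖qbt q α w (n+1)‖ := norm_tsum_le_tsum_norm hsum2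
    _ ≤ ∑' n : ℕ, (C * ‖w‖) * ‖w‖ ^ n := Summable.tsum_le_tsum hle hsum2 hgeo
    _ = C * ‖w‖ * (1 - ‖w‖)⁻¹ := by
        rw [tsum_mul_left, tsum_geometric_of_lt_one (norm_nonneg w) hw]

lemma tendsto_qbt_sum (hq : ‖q‖ < 1) (α : ℂ) {z : ℂ} (hz : ‖z‖ < 1) :
    Tendsto (fun k : ℕ => ∑' n, qbt q α (q ^ k * z) n) atTop (nhds 1) := by
  obtain ⟨C, hC0, hC⟩ := exists_qbt_bound hq α
  have hzk : ∀ k : ℕ, ‖q ^ k * z‖ < 1 := by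
    intro k; rw [mul_comm]; exact norm_wqj_lt hq hz k
  have hbound : ∀ k : ℕ, ‖(∑' n, qbt q α (q ^ k * z) n) - 1‖
      ≤ (C * ‖z‖ * (1 - ‖z‖)⁻¹) * ‖q‖ ^ k := by
    intro k
    have hb := qbt_tail_bound hq α hC0 hC (hzk k)
    refine hb.trans ?_
    have hnw : ‖q ^ k * z‖ ≤ ‖z‖ * ‖q‖ ^ k := by
      rw [norm_mul, norm_pow, mul_comm]
    have hwz : ‖q ^ k * z‖ ≤ ‖z‖ := by
      refine hnw.trans ?_
      calc ‖z‖ * ‖q‖ ^ k ≤ ‖z‖ * 1 :=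
            mul_le_mul_of_nonneg_left (pow_le_one₀ (norm_nonneg q) hq.le) (norm_nonneg z)
        _ = ‖z‖ := mul_one _
    have hinv : (1 - ‖q ^ k * z‖)⁻¹ ≤ (1 - ‖z‖)⁻¹ := by
      apply inv_anti₀ (by linarith) (by linarith)
    have hpos : (0:ℝ) ≤ (1 - ‖q ^ k * z‖)⁻¹ := by
      have : (0:ℝ) < 1 - ‖q ^ k * z‖ := by linarith [hzk k]
      positivity
    calc C * ‖q ^ k * z‖ * (1 - ‖q ^ k * z‖)⁻¹
        ≤ C * (‖z‖ * ‖q‖ ^ k) * (1 - ‖q ^ k * z‖)⁻¹ :=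
          mul_le_mul_of_nonneg_right (mul_le_mul_of_nonneg_left hnw hC0.le) hpos
      _ ≤ C * (‖z‖ * ‖q‖ ^ k) * (1 - ‖z‖)⁻¹ :=
          mul_le_mul_of_nonneg_left hinv (by positivity)
      _ = (C * ‖z‖ * (1 - ‖z‖)⁻¹) * ‖q‖ ^ k := by ring
  have htend : Tendsto (fun k : ℕ => (C * ‖z‖ * (1 - ‖z‖)⁻¹) * ‖q‖ ^ k) atTop (nhds 0) := by
    simpa using (tendsto_pow_atTop_nhds_zero_of_lt_one (norm_nonneg q) hq).const_mul
      (C * ‖z‖ * (1 - ‖z‖)⁻¹)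
  have h1 := squeeze_zero_norm (f := fun k : ℕ => (∑' n, qbt q α (q ^ k * z) n) - 1) hbound htend
  have h2 := h1.add_const 1
  simpa using h2

/-- the q-binomial theorem (Cauchy identity) -/
theorem qbinom_theorem (hq : ‖q‖ < 1) (α : ℂ) {z : ℂ} (hz : ‖z‖ < 1) (hαz : ‖α * z‖ < 1) :
    ∑' n, qbt q α z n = qPochInf q (α * z) / qPochInf q z := by
  have hmain : qPochInf q z * ∑' n, qbt q α z n = qPochInf q (α * z) := by
    have htend1 : Tendsto (fun k : ℕ => qPoch q (α * z) k *
        (qPochInf q (z * q ^ k) * ∑' n, qbt q α (q ^ k * z) n)) atTop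
        (nhds (qPochInf q (α * z) * (1 * 1))) :=
      (tendsto_qPoch hq hαz).mul ((tendsto_qPochInf_pow hq hz).mul (tendsto_qbt_sum hq α hz))
    have hconst : Tendsto (fun _ : ℕ => qPochInf q z * ∑' n, qbt q α z n) atTop
        (nhds (qPochInf q z * ∑' n, qbt q α z n)) := tendsto_const_nhds
    have heq : (fun k : ℕ => qPochInf q z * ∑' n, qbt q α z n)
        = fun k : ℕ => qPoch q (α * z) k *
          (qPochInf q (z * q ^ k) * ∑' n, qbt q α (q ^ k * z) n) := by
      funext k; exact qbinom_iter hq α hz k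
    rw [heq] at hconst
    have := tendsto_nhds_unique hconst htend1
    simpa using this
  rw [eq_div_iff (qPochInf_ne_zero hq hz), mul_comm]
  exact hmain

lemma qbinom_zero (hq : ‖q‖ < 1) (n : ℕ) : qbinom q n 0 = 1 := by
  rw [qbinom]
  simp only [Nat.sub_zero]
  rw [show qPoch q q 0 = 1 from rfl, one_mul, div_self (qPoch_q_ne_zero hq n)]

lemma qbinom_self (hq : ‖q‖ < 1) (n : ℕ) : qbinom q n n = 1 := by
  rw [qbinom]
  simp only [Nat.sub_self]
  rw [show qPoch q q 0 = 1 from rfl, mul_one, div_self (qPoch_q_ne_zero hq n)]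

lemma qbinom_pascal (hq : ‖q‖ < 1) {i k : ℕ} (h : i < k) :
    qbinom q (k+1) (i+1) = qbinom q k (i+1) * q ^ (i+1) + qbinom q k i := by
  obtain ⟨j, rfl⟩ : ∃ j, k = i + 1 + j := ⟨k - i - 1, by omega⟩
  rw [qbinom, qbinom, qbinom]
  have e1 : i + 1 + j + 1 - (i + 1) = j + 1 := by omega
  have e2 : i + 1 + j - (i + 1) = j := by omega
  have e3 : i + 1 + j - i = j + 1 := by omega
  rw [e1, e2, e3]
  have r1 : qPoch q q (i + 1 + j + 1) = qPoch q q (i + 1 + j) * (1 - q * q ^ (i + 1 + j)) :=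
    qPoch_succ q _
  have r2 : qPoch q q (i + 1) = qPoch q q i * (1 - q * q ^ i) := qPoch_succ q i
  have r3 : qPoch q q (j + 1) = qPoch q q j * (1 - q * q ^ j) := qPoch_succ q j
  rw [r1, r2, r3]
  have n1 : qPoch q q (i + 1 + j) ≠ 0 := qPoch_q_ne_zero hq _
  have n2 : qPoch q q i ≠ 0 := qPoch_q_ne_zero hq i
  have n3 : qPoch q q j ≠ 0 := qPoch_q_ne_zero hq j
  have n4 : (1:ℂ) - q * q ^ i ≠ 0 := by
    have := qPoch_q_ne_zero hq (i+1); rw [qPoch_succ] at this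
    exact fun hh => this (by rw [hh, mul_zero])
  have n5 : (1:ℂ) - q * q ^ j ≠ 0 := by
    have := qPoch_q_ne_zero hq (j+1); rw [qPoch_succ] at this
    exact fun hh => this (by rw [hh, mul_zero])
  field_simp
  ring

lemma hahn_sum_key (hq : ‖q‖ < 1) (b c : ℂ) (p : ℕ → ℂ)
    (hp0 : p 0 = 1) (k : ℕ) :
    ∑ i ∈ Finset.range (k+1+1), qbinom q (k+1) i * p i * b ^ i * c ^ (k+1-i)
      = (∑ i ∈ Finset.range (k+1), qbinom q k i * q ^ i * p i * b ^ i * c ^ (k+1-i))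
        + ∑ i ∈ Finset.range (k+1), qbinom q k i * p (i+1) * b ^ (i+1) * c ^ (k-i) := by
  -- expand LHS via first-term extraction
  rw [Finset.sum_range_succ' (fun i => qbinom q (k+1) i * p i * b ^ i * c ^ (k+1-i)) (k+1)]
  -- expand RHS first sum via first-term extraction, second via last-term
  rw [Finset.sum_range_succ' (fun i => qbinom q k i * q ^ i * p i * b ^ i * c ^ (k+1-i)) k]
  rw [Finset.sum_range_succ (fun i => qbinom q k i * p (i+1) * b ^ (i+1) * c ^ (k-i)) k]
  -- split LHS range(k+1) sum into range k plus top
  rw [Finset.sum_range_succ (fun i => qbinom q (k+1) (i+1) * p (i+1) * b ^ (i+1) * c ^ (k+1-(i+1))) k]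
  have e0 : ∀ i : ℕ, k + 1 - (i + 1) = k - i := fun i => by omega
  have etop : k + 1 - (k + 1) = 0 := by omega
  have htop : qbinom q (k+1) (k+1) * p (k+1) * b ^ (k+1) * c ^ (k+1-(k+1))
      = qbinom q k k * p (k+1) * b ^ (k+1) * c ^ (k-k) := by
    rw [qbinom_self hq, qbinom_self hq, etop, Nat.sub_self]
  have h00 : qbinom q (k+1) 0 * p 0 * b ^ 0 * c ^ (k+1-0)
      = qbinom q k 0 * q ^ 0 * p 0 * b ^ 0 * c ^ (k+1-0) := by
    simp [qbinom_zero hq]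
  have hmid : ∀ i ∈ Finset.range k,
      qbinom q (k+1) (i+1) * p (i+1) * b ^ (i+1) * c ^ (k+1-(i+1))
        = qbinom q k (i+1) * q ^ (i+1) * p (i+1) * b ^ (i+1) * c ^ (k+1-(i+1))
          + qbinom q k i * p (i+1) * b ^ (i+1) * c ^ (k-i) := by
    intro i hi
    rw [Finset.mem_range] at hi
    rw [qbinom_pascal hq hi, e0 i]
    ring
  rw [Finset.sum_congr rfl hmid, Finset.sum_add_distrib, htop, h00]
  have hre : ∀ i ∈ Finset.range k,
      qbinom q k (i+1) * q ^ (i+1) * p (i+1) * b ^ (i+1) * c ^ (k+1-(i+1))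
      = (fun i => qbinom q k i * q ^ i * p i * b ^ i * c ^ (k+1-i)) (i+1) := fun i _ => rfl
  ring

lemma hahn_rec (hq : ‖q‖ < 1) (b c t : ℂ) (k : ℕ) :
    hahn q (c*t) b c k - (1 - b*t) * (1 - c*t) * hahn q (c*(q*t)) b c k
      = t * hahn q (c*t) b c (k+1) := by
  have hshift : ∀ i : ℕ, (1 - c*t) * qPoch q (c*(q*t)) i = qPoch q (c*t) (i+1) := by
    intro i
    rw [show c*(q*t) = (c*t)*q by ring, qPoch_succ']
  have hstep : ∀ i : ℕ, qPoch q (c*t) i - (1 - b*t) * ((1 - c*t) * qPoch q (c*(q*t)) i)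
      = t * (c * q ^ i * qPoch q (c*t) i + b * qPoch q (c*t) (i+1)) := by
    intro i
    rw [hshift i, qPoch_succ]
    ring
  rw [hahn, hahn, hahn, Finset.mul_sum, Finset.mul_sum, ← Finset.sum_sub_distrib]
  have hterm : ∀ i ∈ Finset.range (k+1),
      qbinom q k i * qPoch q (c*t) i * b ^ i * c ^ (k - i)
        - (1 - b*t) * (1 - c*t) * (qbinom q k i * qPoch q (c*(q*t)) i * b ^ i * c ^ (k - i))
      = t * (qbinom q k i * q ^ i * qPoch q (c*t) i * b ^ i * c ^ (k+1-i)
          + qbinom q k i * qPoch q (c*t) (i+1) * b ^ (i+1) * c ^ (k-i)) := by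
    intro i hi
    rw [Finset.mem_range] at hi
    have hc : c ^ (k+1-i) = c * c ^ (k-i) := by
      rw [show k+1-i = (k-i)+1 by omega, pow_succ]
      ring
    have := hstep i
    calc qbinom q k i * qPoch q (c*t) i * b ^ i * c ^ (k - i)
        - (1 - b*t) * (1 - c*t) * (qbinom q k i * qPoch q (c*(q*t)) i * b ^ i * c ^ (k - i))
        = (qPoch q (c*t) i - (1 - b*t) * ((1 - c*t) * qPoch q (c*(q*t)) i))
            * (qbinom q k i * b ^ i * c ^ (k-i)) := by ring
      _ = t * (c * q ^ i * qPoch q (c*t) i + b * qPoch q (c*t) (i+1))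
            * (qbinom q k i * b ^ i * c ^ (k-i)) := by rw [this]
      _ = t * (qbinom q k i * q ^ i * qPoch q (c*t) i * b ^ i * c ^ (k+1-i)
          + qbinom q k i * qPoch q (c*t) (i+1) * b ^ (i+1) * c ^ (k-i)) := by
          rw [hc]; ring
  rw [Finset.sum_congr rfl hterm, ← Finset.mul_sum, ← Finset.mul_sum]
  congr 1
  rw [Finset.sum_add_distrib, hahn_sum_key hq b c (qPoch q (c*t)) rfl k]


lemma f_shift (hq : ‖q‖ < 1) {b c t : ℂ} (hbt : ‖b*t‖ < 1) (hct : ‖c*t‖ < 1) :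
    (fun t => 1 / (qPochInf q (b * t) * qPochInf q (c * t))) (q * t)
      = (1 - b*t) * (1 - c*t) * (fun t => 1 / (qPochInf q (b * t) * qPochInf q (c * t))) t := by
  simp only
  have hb2 : qPochInf q (b * t) = (1 - b*t) * qPochInf q (b * (q * t)) := by
    rw [qPochInf_split hq hbt]
    congr 2
    ring
  have hc2 : qPochInf q (c * t) = (1 - c*t) * qPochInf q (c * (q * t)) := by
    rw [qPochInf_split hq hct]
    congr 2
    ring
  have hbq : ‖b * (q * t)‖ < 1 := by
    have := norm_wqj_lt hq hbt 1
    rw [pow_one] at this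
    calc ‖b * (q * t)‖ = ‖b * t * q‖ := by ring_nf
      _ < 1 := this
  have hcq : ‖c * (q * t)‖ < 1 := by
    have := norm_wqj_lt hq hct 1
    rw [pow_one] at this
    calc ‖c * (q * t)‖ = ‖c * t * q‖ := by ring_nf
      _ < 1 := this
  have nb : qPochInf q (b * (q * t)) ≠ 0 := qPochInf_ne_zero hq hbq
  have nc : qPochInf q (c * (q * t)) ≠ 0 := qPochInf_ne_zero hq hcq
  have nu : (1:ℂ) - b*t ≠ 0 := one_sub_ne_zero_of_norm_lt' hbt
  have nv : (1:ℂ) - c*t ≠ 0 := one_sub_ne_zero_of_norm_lt' hct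
  rw [hb2, hc2]
  have e : (1 - b*t) * qPochInf q (b * (q * t)) * ((1 - c*t) * qPochInf q (c * (q * t)))
      = ((1 - b*t) * (1 - c*t)) * (qPochInf q (b * (q * t)) * qPochInf q (c * (q * t))) := by ring
  rw [e, one_div, one_div, mul_inv (a := (1 - b*t) * (1 - c*t)), ← mul_assoc ((1 - b*t) * (1 - c*t)),
    mul_inv_cancel₀ (mul_ne_zero nu nv), one_mul, mul_inv]

lemma Dq_iter (hq : ‖q‖ < 1) (hq0 : q ≠ 0) (b c : ℂ) (k : ℕ) :
    ∀ t : ℂ, t ≠ 0 → ‖b*t‖ < 1 → ‖c*t‖ < 1 →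
    (Dq q)^[k] (fun t => 1 / (qPochInf q (b * t) * qPochInf q (c * t))) t
      = hahn q (c*t) b c k * (fun t => 1 / (qPochInf q (b * t) * qPochInf q (c * t))) t := by
  induction k with
  | zero =>
    intro t ht hbt hct
    simp only [Function.iterate_zero, id_eq]
    rw [hahn]
    simp [qbinom_self hq 0, qPoch]
  | succ k ih =>
    intro t ht hbt hct
    rw [Function.iterate_succ_apply']
    have hqt : q * t ≠ 0 := mul_ne_zero hq0 ht
    have hbqt : ‖b * (q * t)‖ < 1 := by
      have := norm_wqj_lt hq hbt 1
      rw [pow_one] at this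
      calc ‖b * (q * t)‖ = ‖b * t * q‖ := by ring_nf
        _ < 1 := this
    have hcqt : ‖c * (q * t)‖ < 1 := by
      have := norm_wqj_lt hq hct 1
      rw [pow_one] at this
      calc ‖c * (q * t)‖ = ‖c * t * q‖ := by ring_nf
        _ < 1 := this
    rw [Dq]
    simp only
    rw [ih t ht hbt hct, ih (q * t) hqt hbqt hcqt, f_shift hq hbt hct]
    rw [show c * (q * t) = c * (q*t) from rfl]
    have key := hahn_rec hq b c t k
    set F := (fun t => 1 / (qPochInf q (b * t) * qPochInf q (c * t))) t with hF
    calc (hahn q (c*t) b c k * F - hahn q (c*(q*t)) b c k * ((1 - b*t) * (1 - c*t) * F)) / t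
        = ((hahn q (c*t) b c k - (1 - b*t) * (1 - c*t) * hahn q (c*(q*t)) b c k) * F) / t := by
          ring_nf
      _ = (t * hahn q (c*t) b c (k+1) * F) / t := by rw [key]
      _ = hahn q (c*t) b c (k+1) * F := by
          field_simp


end aux

/-- Chen–Liu q-exponential operator identity. -/
theorem qexp_op_inv_two_qPochInf (q a b c : ℂ) (hq0 : q ≠ 0) (hq : ‖q‖ < 1)
    (hab : ‖a * b‖ < 1) (hac : ‖a * c‖ < 1) (x : ℂ) (hx : x ≠ 0)
    (hbx : ‖b * x‖ < 1) (hcx : ‖c * x‖ < 1) :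
    ∑' k : ℕ, a ^ k / qPoch q q k *
        ((Dq q)^[k] (fun t => 1 / (qPochInf q (b * t) * qPochInf q (c * t))) x)
      = qPochInf q (a * b * c * x) /
          (qPochInf q (b * x) * qPochInf q (c * x) * qPochInf q (a * c) *
            qPochInf q (a * b)) := by
  set F : ℂ := 1 / (qPochInf q (b * x) * qPochInf q (c * x)) with hF
  set u : ℕ → ℂ := qbt q (c*x) (a*b) with hu
  set v : ℕ → ℂ := qbt q 0 (a*c) with hv
  -- step 1: rewrite each term
  have step1 : ∀ k : ℕ, a ^ k / qPoch q q k *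
      ((Dq q)^[k] (fun t => 1 / (qPochInf q (b * t) * qPochInf q (c * t))) x)
      = (∑ i ∈ Finset.range (k+1), u i * v (k - i)) * F := by
    intro k
    rw [Dq_iter hq hq0 b c k x hx hbx hcx]
    simp only
    rw [← hF]
    have key : a ^ k / qPoch q q k * hahn q (c*x) b c k
        = ∑ i ∈ Finset.range (k+1), u i * v (k - i) := by
      rw [hahn, Finset.mul_sum]
      apply Finset.sum_congr rfl
      intro i hi
      rw [Finset.mem_range] at hi
      have hik : i ≤ k := by omega
      have hsplit : a ^ k = a ^ i * a ^ (k - i) := by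
        rw [← pow_add]
        congr 1
        omega
      rw [hu, hv, qbt, qbt]
      have h0 : qPoch q 0 (k - i) = 1 := by
        rw [qPoch]
        apply Finset.prod_eq_one
        intro j _
        rw [zero_mul, sub_zero]
      rw [h0, one_mul, qbinom]
      have n1 : qPoch q q k ≠ 0 := qPoch_q_ne_zero hq k
      have n2 : qPoch q q i ≠ 0 := qPoch_q_ne_zero hq i
      have n3 : qPoch q q (k - i) ≠ 0 := qPoch_q_ne_zero hq (k - i)
      field_simp
      rw [hsplit, mul_pow, mul_pow]
      ring
    calc a ^ k / qPoch q q k * (hahn q (c*x) b c k * F)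
        = (a ^ k / qPoch q q k * hahn q (c*x) b c k) * F := by ring
      _ = (∑ i ∈ Finset.range (k+1), u i * v (k - i)) * F := by rw [key]
  rw [tsum_congr step1, tsum_mul_right]
  -- step 2: Cauchy product
  have hcauchy : ∑' k : ℕ, ∑ i ∈ Finset.range (k+1), u i * v (k - i)
      = (∑' n, u n) * (∑' n, v n) := by
    exact (tsum_mul_tsum_eq_tsum_sum_range_of_summable_norm
      (summable_qbt_norm hq (c*x) hab) (summable_qbt_norm hq 0 hac)).symm
  rw [hcauchy]
  -- step 3: evaluate the two sums
  have hcxab : ‖c * x * (a * b)‖ < 1 := by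
    rw [norm_mul]
    nlinarith [norm_nonneg (c*x), norm_nonneg (a*b)]
  have h1 : (∑' n, u n) = qPochInf q (a * b * c * x) / qPochInf q (a * b) := by
    rw [hu, qbinom_theorem hq (c*x) hab hcxab]
    congr 2
    ring
  have h2 : (∑' n, v n) = 1 / qPochInf q (a * c) := by
    rw [hv, qbinom_theorem hq 0 hac (by simpa using (by norm_num : (0:ℝ) < 1))]
    rw [zero_mul]
    have hz0 : qPochInf q 0 = 1 := by
      rw [qPochInf]
      simp
    rw [hz0]
  rw [h1, h2, hF]
  have nb : qPochInf q (b * x) ≠ 0 := qPochInf_ne_zero hq hbx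
  have nc : qPochInf q (c * x) ≠ 0 := qPochInf_ne_zero hq hcx
  have nac : qPochInf q (a * c) ≠ 0 := qPochInf_ne_zero hq hac
  have nab : qPochInf q (a * b) ≠ 0 := qPochInf_ne_zero hq hab
  field_simp
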